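/- Let x¹, x², x³ and y¹, y², y³ be points in the Euclidean plane ℝ² with ‖xⁱ − xʲ‖ ≥ ‖yⁱ − yʲ‖ for all i, j. Then there exists a 1-Lipschitz map φ : ℝ² → ℝ² with φ(xⁱ) = yⁱ for i = 1, 2, 3. -/

import Mathlib

open Set Metric

section Kirszbraun

variable {E : Type*} [NormedAddCommGroup E] [InnerProductSpace ℝ E] [FiniteDimensional ℝ E]

local notation "⟪" x ", " y "⟫" => @inner ℝ _ _ x y

/-- Barycenter identity: the weighted sum of squared distances to a point `c` equals half the
weighted double sum of pairwise squared distances plus the squared distance from `c` to the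
barycenter. -/
lemma sum_norm_sub_sq_eq {α : Type*} (t : Finset α) (w : α → ℝ) (v : α → E)
    (hw : ∑ i ∈ t, w i = 1) (c : E) :
    ∑ i ∈ t, w i * ‖v i - c‖ ^ 2 =
      (1/2) * (∑ i ∈ t, ∑ j ∈ t, w i * w j * ‖v i - v j‖ ^ 2)
        + ‖c - ∑ j ∈ t, w j • v j‖ ^ 2 := by
  set b : E := ∑ j ∈ t, w j • v j with hb
  have hbc : ∀ c : E, ⟪b, c⟫ = ∑ j ∈ t, w j * ⟪v j, c⟫ := by
    intro c
    rw [hb, sum_inner]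
    exact Finset.sum_congr rfl fun j _ => real_inner_smul_left _ _ _
  have key : ∀ c : E, ∑ i ∈ t, w i * ‖v i - c‖ ^ 2
      = (∑ i ∈ t, w i * ‖v i‖ ^ 2) - 2 * ⟪b, c⟫ + ‖c‖ ^ 2 := by
    intro c
    calc ∑ i ∈ t, w i * ‖v i - c‖ ^ 2
        = ∑ i ∈ t, (w i * ‖v i‖ ^ 2 - 2 * (w i * ⟪v i, c⟫) + w i * ‖c‖ ^ 2) := by
          refine Finset.sum_congr rfl fun i _ => ?_
          rw [norm_sub_sq_real]; ring
      _ = (∑ i ∈ t, w i * ‖v i‖ ^ 2) - 2 * (∑ i ∈ t, w i * ⟪v i, c⟫)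
            + (∑ i ∈ t, w i) * ‖c‖ ^ 2 := by
          rw [Finset.sum_add_distrib, Finset.sum_sub_distrib, Finset.mul_sum, Finset.sum_mul]
      _ = (∑ i ∈ t, w i * ‖v i‖ ^ 2) - 2 * ⟪b, c⟫ + ‖c‖ ^ 2 := by rw [← hbc, hw, one_mul]
  have hdouble : ∑ i ∈ t, ∑ j ∈ t, w i * w j * ‖v i - v j‖ ^ 2
      = 2 * (∑ i ∈ t, w i * ‖v i‖ ^ 2) - 2 * ‖b‖ ^ 2 := by
    have inner_b : ∑ j ∈ t, w j * ⟪b, v j⟫ = ‖b‖ ^ 2 := by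
      have : ∀ j, w j * ⟪b, v j⟫ = ⟪b, w j • v j⟫ := by
        intro j; rw [real_inner_smul_right]
      simp_rw [this]
      rw [← inner_sum, ← hb, real_inner_self_eq_norm_sq]
    calc ∑ i ∈ t, ∑ j ∈ t, w i * w j * ‖v i - v j‖ ^ 2
        = ∑ j ∈ t, w j * ∑ i ∈ t, w i * ‖v i - v j‖ ^ 2 := by
          rw [Finset.sum_comm]
          refine Finset.sum_congr rfl fun j _ => ?_
          rw [Finset.mul_sum]
          refine Finset.sum_congr rfl fun i _ => ?_
          ring
      _ = ∑ j ∈ t, w j * ((∑ i ∈ t, w i * ‖v i‖ ^ 2) - 2 * ⟪b, v j⟫ + ‖v j‖ ^ 2) := by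
          refine Finset.sum_congr rfl fun j _ => ?_
          rw [key]
      _ = (∑ j ∈ t, w j) * (∑ i ∈ t, w i * ‖v i‖ ^ 2)
            - 2 * (∑ j ∈ t, w j * ⟪b, v j⟫) + ∑ j ∈ t, w j * ‖v j‖ ^ 2 := by
          rw [Finset.sum_mul, Finset.mul_sum, ← Finset.sum_sub_distrib, ← Finset.sum_add_distrib]
          exact Finset.sum_congr rfl fun j _ => by ring
      _ = 2 * (∑ i ∈ t, w i * ‖v i‖ ^ 2) - 2 * ‖b‖ ^ 2 := by
          rw [hw, inner_b]; ring
  rw [key, hdouble, norm_sub_sq_real, real_inner_comm]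
  ring

/-- Kirszbraun's ball intersection lemma: if a finite family of points `qs i` is a "short image"
of `ps i`, then for any `p` the closed balls around `qs i` of radii `dist p (ps i)` have a
common point. -/
lemma kirszbraun_balls {ι : Type*} (s : Finset ι) (hs : s.Nonempty)
    (p : E) (ps qs : ι → E)
    (h : ∀ i ∈ s, ∀ j ∈ s, dist (qs i) (qs j) ≤ dist (ps i) (ps j)) :
    ∃ z : E, ∀ i ∈ s, dist z (qs i) ≤ dist p (ps i) := by
  classical
  set f : ι → E → ℝ := fun i z => ‖z - qs i‖ ^ 2 - ‖p - ps i‖ ^ 2 with hf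
  set g : E → ℝ := fun z => s.sup' hs (fun i => f i z) with hg
  have hfc : ∀ i, Continuous (f i) := by
    intro i
    apply Continuous.sub _ continuous_const
    exact Continuous.pow (Continuous.norm (Continuous.sub continuous_id continuous_const)) 2
  have hgc : Continuous g := by
    rw [continuous_iff_continuousAt]
    intro z
    exact ContinuousAt.finset_sup'_apply hs fun i _ => (hfc i).continuousAt
  set K := convexHull ℝ (↑(s.image qs) : Set E) with hK
  have hKcp : IsCompact K := (s.image qs).finite_toSet.isCompact_convexHull ℝ
  have hKcv : Convex ℝ K := convex_convexHull _ _
  have hKne : K.Nonempty :=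
    ⟨qs hs.choose, subset_convexHull _ _ (Finset.mem_coe.mpr (Finset.mem_image_of_mem _ hs.choose_spec))⟩
  obtain ⟨z, hzK, hzmin⟩ := hKcp.exists_isMinOn hKne hgc.continuousOn
  set m := g z with hm
  set A := s.filter (fun i => f i z = m) with hA
  have hAs : A ⊆ s := Finset.filter_subset _ _
  have hAne : A.Nonempty := by
    obtain ⟨i, hi, hival⟩ := Finset.exists_mem_eq_sup' hs (fun i => f i z)
    exact ⟨i, Finset.mem_filter.mpr ⟨hi, hival.symm⟩⟩
  -- the minimizer lies in the convex hull of the active points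
  have hzS : z ∈ convexHull ℝ (↑(A.image qs) : Set E) := by
    by_contra hzS
    set S' := convexHull ℝ (↑(A.image qs) : Set E) with hS'
    have hS'ne : S'.Nonempty :=
      ⟨qs hAne.choose, subset_convexHull _ _ (Finset.mem_coe.mpr (Finset.mem_image_of_mem _ hAne.choose_spec))⟩
    have hS'cv : Convex ℝ S' := convex_convexHull _ _
    have hS'cp : IsCompact S' := (A.image qs).finite_toSet.isCompact_convexHull ℝ
    obtain ⟨w, hwS, hwmin⟩ :=
      exists_norm_eq_iInf_of_complete_convex hS'ne hS'cp.isComplete hS'cv z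
    have hproj : ∀ u ∈ S', ⟪z - w, u - w⟫ ≤ 0 :=
      (norm_eq_iInf_iff_real_inner_le_zero hS'cv hwS).mp hwmin
    have hzw : z ≠ w := fun hzw => hzS (hzw ▸ hwS)
    have hzwpos : 0 < ‖z - w‖ := by
      rw [norm_pos_iff]; exact sub_ne_zero.mpr hzw
    have hstrict : ∀ i ∈ A, ‖w - qs i‖ < ‖z - qs i‖ := by
      intro i hi
      have hq : qs i ∈ S' := subset_convexHull _ _ (Finset.mem_coe.mpr (Finset.mem_image_of_mem _ hi))
      have h1 := hproj (qs i) hq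
      have h2 : ‖z - qs i‖ ^ 2 = ‖z - w‖ ^ 2 + ‖w - qs i‖ ^ 2 - 2 * ⟪z - w, qs i - w⟫ := by
        have h3 := norm_sub_sq_real (z - w) (qs i - w)
        have h4 : (z - w) - (qs i - w) = z - qs i := by abel
        rw [h4] at h3
        rw [h3, norm_sub_rev (qs i) w]
        ring
      have h5 : ‖w - qs i‖ ^ 2 < ‖z - qs i‖ ^ 2 := by nlinarith
      exact lt_of_pow_lt_pow_left₀ 2 (norm_nonneg _) h5
    have hwK : w ∈ K := by
      refine convexHull_mono ?_ hwS
      intro u hu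
      simp only [Finset.coe_image, Set.mem_image, Finset.mem_coe] at hu ⊢
      obtain ⟨i, hiA, rfl⟩ := hu
      exact ⟨i, hAs hiA, rfl⟩
    -- find a point of K with strictly smaller g-value
    have hev : ∀ᶠ δ in nhds (0:ℝ), ∀ i ∈ s, i ∉ A → f i (z + δ • (w - z)) < m := by
      rw [Filter.eventually_all_finset]
      intro i hi
      by_cases hiA : i ∈ A
      · simp [hiA]
      · have hlt : f i z < m := by
          have hle : f i z ≤ m := Finset.le_sup' (fun i => f i z) hi
          rcases hle.lt_or_eq with h' | h'
          · exact h'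
          · exact absurd (Finset.mem_filter.mpr ⟨hi, h'⟩) hiA
        have hcont : Continuous (fun δ : ℝ => f i (z + δ • (w - z))) := by
          apply (hfc i).comp
          exact Continuous.add continuous_const (Continuous.smul continuous_id continuous_const)
        have htend : Filter.Tendsto (fun δ : ℝ => f i (z + δ • (w - z))) (nhds 0) (nhds (f i z)) := by
          have := hcont.tendsto 0
          simpa using this
        filter_upwards [htend.eventually_lt_const hlt] with δ hδ
        exact fun _ => hδ
    obtain ⟨ε, hεpos, hball⟩ := Metric.eventually_nhds_iff.mp hev
    set δ : ℝ := min (ε/2) 1 with hδdef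
    have hδpos : 0 < δ := lt_min (by linarith) one_pos
    have hδle1 : δ ≤ 1 := min_le_right _ _
    have hδε : dist δ (0:ℝ) < ε := by
      rw [Real.dist_eq, sub_zero, abs_of_pos hδpos]
      exact lt_of_le_of_lt (min_le_left _ _) (by linarith)
    set z' : E := z + δ • (w - z) with hz'
    have hz'K : z' ∈ K := by
      have heq : z' = (1 - δ) • z + δ • w := by rw [hz']; module
      rw [heq]
      exact hKcv hzK hwK (by linarith) (le_of_lt hδpos) (by ring)
    have hz'lt : g z' < m := by
      rw [hg, Finset.sup'_lt_iff]
      intro i hi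
      by_cases hiA : i ∈ A
      · have he : z' - qs i = (1 - δ) • (z - qs i) + δ • (w - qs i) := by rw [hz']; module
        have hn : ‖z' - qs i‖ < ‖z - qs i‖ := by
          calc ‖z' - qs i‖ ≤ (1 - δ) * ‖z - qs i‖ + δ * ‖w - qs i‖ := by
                rw [he]
                refine le_trans (norm_add_le _ _) ?_
                rw [norm_smul, norm_smul, Real.norm_eq_abs, Real.norm_eq_abs,
                  abs_of_nonneg (by linarith : (0:ℝ) ≤ 1 - δ), abs_of_pos hδpos]
            _ < (1 - δ) * ‖z - qs i‖ + δ * ‖z - qs i‖ := by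
                have := hstrict i hiA
                have h1δ : 0 ≤ 1 - δ := by linarith
                nlinarith
            _ = ‖z - qs i‖ := by ring
        have hfi : f i z = m := (Finset.mem_filter.mp hiA).2
        rw [hf]
        simp only
        rw [← hfi, hf]
        simp only
        have : ‖z' - qs i‖ ^ 2 < ‖z - qs i‖ ^ 2 :=
          pow_lt_pow_left₀ hn (norm_nonneg _) (by norm_num)
        linarith
      · exact hball hδε i hi hiA
    have := hzmin hz'K
    simp only [hm] at this
    exact absurd (lt_of_le_of_lt this hz'lt) (lt_irrefl _)
  -- extract weights and conclude m ≤ 0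
  rw [Finset.convexHull_eq] at hzS
  obtain ⟨w, hw0, hw1, hwz⟩ := hzS
  rw [Finset.centerMass_eq_of_sum_1 _ _ hw1] at hwz
  set t := A.image qs with ht
  have hch : ∀ u ∈ t, ∃ i, i ∈ A ∧ qs i = u := by
    intro u hu
    obtain ⟨i, hi, hqi⟩ := Finset.mem_image.mp hu
    exact ⟨i, hi, hqi⟩
  classical
  set ch : E → ι := fun u => if h : ∃ i, i ∈ A ∧ qs i = u then h.choose else hs.choose with hchdef
  have hch1 : ∀ u ∈ t, ch u ∈ A := by
    intro u hu
    rw [hchdef]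
    simp only
    rw [dif_pos (hch u hu)]
    exact (hch u hu).choose_spec.1
  have hch2 : ∀ u ∈ t, qs (ch u) = u := by
    intro u hu
    rw [hchdef]
    simp only
    rw [dif_pos (hch u hu)]
    exact (hch u hu).choose_spec.2
  have hbary : ∑ j ∈ t, w j • (fun u : E => u) j = z := by
    rw [← hwz]
    rfl
  have Eq1 := sum_norm_sub_sq_eq t w (fun u : E => u) hw1 z
  have Eq2 := sum_norm_sub_sq_eq t w (fun u : E => ps (ch u)) hw1 p
  rw [hbary] at Eq1
  simp only [sub_self, norm_zero] at Eq1
  -- pairwise comparison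
  have hpair : ∑ i ∈ t, ∑ j ∈ t, w i * w j * ‖(fun u : E => u) i - (fun u : E => u) j‖ ^ 2
      ≤ ∑ i ∈ t, ∑ j ∈ t, w i * w j * ‖ps (ch i) - ps (ch j)‖ ^ 2 := by
    refine Finset.sum_le_sum fun i hi => Finset.sum_le_sum fun j hj => ?_
    have hij : ‖i - j‖ ≤ ‖ps (ch i) - ps (ch j)‖ := by
      have := h (ch i) (hAs (hch1 i hi)) (ch j) (hAs (hch1 j hj))
      rw [dist_eq_norm, dist_eq_norm, hch2 i hi, hch2 j hj] at this
      exact this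
    have hw0i : 0 ≤ w i := hw0 i hi
    have hw0j : 0 ≤ w j := hw0 j hj
    have hsq : ‖i - j‖ ^ 2 ≤ ‖ps (ch i) - ps (ch j)‖ ^ 2 :=
      pow_le_pow_left₀ (norm_nonneg _) hij 2
    have := mul_nonneg hw0i hw0j
    nlinarith
  have hmain : ∑ i ∈ t, w i * ‖i - z‖ ^ 2 ≤ ∑ i ∈ t, w i * ‖ps (ch i) - p‖ ^ 2 := by
    rw [Eq1, Eq2]
    have hsq : (0:ℝ) ≤ ‖p - ∑ j ∈ t, w j • ps (ch j)‖ ^ 2 := sq_nonneg _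
    linarith
  -- evaluate the left side using activeness
  have hleft : ∑ i ∈ t, w i * ‖i - z‖ ^ 2 = m + ∑ i ∈ t, w i * ‖p - ps (ch i)‖ ^ 2 := by
    have : ∀ i ∈ t, w i * ‖i - z‖ ^ 2 = w i * m + w i * ‖p - ps (ch i)‖ ^ 2 := by
      intro i hi
      have hact : f (ch i) z = m := (Finset.mem_filter.mp (hch1 i hi)).2
      rw [hf] at hact
      simp only at hact
      rw [hch2 i hi] at hact
      have : ‖i - z‖ ^ 2 = m + ‖p - ps (ch i)‖ ^ 2 := by
        rw [norm_sub_rev]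
        linarith
      rw [this]; ring
    rw [Finset.sum_congr rfl this, Finset.sum_add_distrib, ← Finset.sum_mul, hw1, one_mul]
  have hright : ∑ i ∈ t, w i * ‖ps (ch i) - p‖ ^ 2 = ∑ i ∈ t, w i * ‖p - ps (ch i)‖ ^ 2 := by
    refine Finset.sum_congr rfl fun i _ => ?_
    rw [norm_sub_rev]
  have hm0 : m ≤ 0 := by
    rw [hleft, hright] at hmain
    linarith
  refine ⟨z, fun i hi => ?_⟩
  have hle : f i z ≤ m := Finset.le_sup' (fun i => f i z) hi
  rw [hf] at hle
  simp only at hle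
  have : ‖z - qs i‖ ^ 2 ≤ ‖p - ps i‖ ^ 2 := by linarith
  have := le_of_pow_le_pow_left₀ (by norm_num) (norm_nonneg _) this
  rwa [dist_eq_norm, dist_eq_norm]


/-- One-point extension: a short map defined on an arbitrary subset of a finite-dimensional
inner product space can be extended to one more point. -/
lemma exists_extension_point [Nonempty E] (S : Set E) (f : E → E)
    (hf : ∀ a ∈ S, ∀ b ∈ S, dist (f a) (f b) ≤ dist a b) (p : E) :
    ∃ z : E, ∀ a ∈ S, dist z (f a) ≤ dist p a := by
  classical
  rcases S.eq_empty_or_nonempty with rfl | ⟨a0, ha0⟩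
  · exact ⟨Classical.arbitrary E, by simp⟩
  have hfin : ∀ I : Finset E, ↑I ⊆ S →
      (closedBall (f a0) (dist p a0) ∩ ⋂ a ∈ I, closedBall (f a) (dist p a)).Nonempty := by
    intro I hI
    have hmem : ∀ i ∈ insert a0 I, i ∈ S := by
      intro i hi
      rcases Finset.mem_insert.mp hi with rfl | hi
      · exact ha0
      · exact hI (Finset.mem_coe.mpr hi)
    obtain ⟨z, hz⟩ := kirszbraun_balls (insert a0 I) ⟨a0, Finset.mem_insert_self _ _⟩ p id f
      (fun i hi j hj => hf _ (hmem i hi) _ (hmem j hj))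
    refine ⟨z, ?_, ?_⟩
    · exact mem_closedBall.mpr (hz a0 (Finset.mem_insert_self _ _))
    · rw [Set.mem_iInter₂]
      intro a ha
      exact mem_closedBall.mpr (hz a (Finset.mem_insert_of_mem ha))
  have key : (closedBall (f a0) (dist p a0) ∩ ⋂ a : S, closedBall (f a.1) (dist p a.1)).Nonempty := by
    apply IsCompact.inter_iInter_nonempty (isCompact_closedBall _ _)
      (fun a : S => closedBall (f a.1) (dist p a.1)) (fun a => isClosed_closedBall)
    intro I
    have := hfin (I.image Subtype.val) (by
      intro a ha
      obtain ⟨b, _, rfl⟩ := Finset.mem_image.mp (Finset.mem_coe.mp ha)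
      exact b.2)
    obtain ⟨z, hz1, hz2⟩ := this
    refine ⟨z, hz1, ?_⟩
    rw [Set.mem_iInter₂] at hz2 ⊢
    intro a ha
    exact hz2 a.1 (Finset.mem_image_of_mem _ ha)
  obtain ⟨z, _, hz2⟩ := key
  refine ⟨z, fun a ha => ?_⟩
  have := Set.mem_iInter.mp hz2 ⟨a, ha⟩
  exact mem_closedBall.mp this

end Kirszbraun

set_option maxHeartbeats 1000000 in
theorem short_map_three_points_plane
    (x y : Fin 3 → EuclideanSpace ℝ (Fin 2))
    (h : ∀ i j, dist (y i) (y j) ≤ dist (x i) (x j)) :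
    ∃ φ : EuclideanSpace ℝ (Fin 2) → EuclideanSpace ℝ (Fin 2),
      LipschitzWith 1 φ ∧ ∀ i, φ (x i) = y i := by
  classical
  set G0 : Set (EuclideanSpace ℝ (Fin 2) × EuclideanSpace ℝ (Fin 2)) := Set.range (fun i => (x i, y i)) with hG0
  set 𝒢 : Set (Set (EuclideanSpace ℝ (Fin 2) × EuclideanSpace ℝ (Fin 2))) :=
    {G | G0 ⊆ G ∧ ∀ ab ∈ G, ∀ cd ∈ G, dist (Prod.snd ab) (Prod.snd cd) ≤ dist (Prod.fst ab) (Prod.fst cd)} with h𝒢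
  have hG0mem : G0 ∈ 𝒢 := by
    constructor
    · exact subset_rfl
    · rintro ab ⟨i, rfl⟩ cd ⟨j, rfl⟩
      exact h i j
  obtain ⟨M, hG0M, hMmax⟩ := zorn_subset_nonempty 𝒢 (by
    intro c hc𝒢 hchain hcne
    refine ⟨⋃₀ c, ⟨?_, ?_⟩, fun G hG => Set.subset_sUnion_of_mem hG⟩
    · obtain ⟨G, hG⟩ := hcne
      exact subset_trans (hc𝒢 hG).1 (Set.subset_sUnion_of_mem hG)
    · rintro ab ⟨G1, hG1, hab⟩ cd ⟨G2, hG2, hcd⟩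
      rcases hchain.total hG1 hG2 with h12 | h21
      · exact (hc𝒢 hG2).2 ab (h12 hab) cd hcd
      · exact (hc𝒢 hG1).2 ab hab cd (h21 hcd)) G0 hG0mem
  have hM𝒢 : M ∈ 𝒢 := hMmax.1
  have hMshort := hM𝒢.2
  have htot : ∀ p : EuclideanSpace ℝ (Fin 2), ∃ b, (p, b) ∈ M := by
    intro p
    by_contra hp
    push_neg at hp
    set S : Set (EuclideanSpace ℝ (Fin 2)) := Prod.fst '' M with hS
    have h' : ∀ a : EuclideanSpace ℝ (Fin 2), ∃ b, a ∈ S → (a, b) ∈ M := by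
      intro a
      by_cases ha : a ∈ S
      · obtain ⟨⟨a', b⟩, hab, rfl⟩ := ha
        exact ⟨b, fun _ => hab⟩
      · exact ⟨0, fun hmem => absurd hmem ha⟩
    choose fM hfMmem' using h'
    have hfMmem : ∀ a ∈ S, (a, fM a) ∈ M := fun a ha => hfMmem' a ha
    have hfMshort : ∀ a ∈ S, ∀ b ∈ S, dist (fM a) (fM b) ≤ dist a b := by
      intro a ha b hb
      exact hMshort (a, fM a) (hfMmem a ha) (b, fM b) (hfMmem b hb)
    obtain ⟨z, hz⟩ := exists_extension_point S fM hfMshort p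
    have hMval : ∀ a b, (a, b) ∈ M → b = fM a := by
      intro a b hab
      have h1 := hMshort (a, b) hab (a, fM a) (hfMmem a ⟨(a, b), hab, rfl⟩)
      simp only [dist_self] at h1
      exact dist_le_zero.mp h1
    have hM' : insert (p, z) M ∈ 𝒢 := by
      constructor
      · exact subset_trans hG0M (Set.subset_insert _ _)
      · rintro ab (rfl | hab) cd (rfl | hcd)
        · simp
        · have hcd2 : cd.2 = fM cd.1 := hMval _ _ hcd
          have hcd1 : cd.1 ∈ S := ⟨cd, hcd, rfl⟩
          rw [hcd2]
          exact hz cd.1 hcd1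
        · have hab2 : ab.2 = fM ab.1 := hMval _ _ hab
          have hab1 : ab.1 ∈ S := ⟨ab, hab, rfl⟩
          rw [hab2, dist_comm, dist_comm ab.1 p]
          exact hz ab.1 hab1
        · exact hMshort ab hab cd hcd
    have hsub : insert (p, z) M ⊆ M := hMmax.2 hM' (Set.subset_insert _ _)
    have hpz : (p, z) ∈ M := hsub (Set.mem_insert _ _)
    exact hp z hpz
  choose φ hφ using htot
  refine ⟨φ, ?_, ?_⟩
  · apply LipschitzWith.of_dist_le_mul
    intro a b
    have := hMshort (a, φ a) (hφ a) (b, φ b) (hφ b)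
    simpa using this
  · intro i
    have h1 : (x i, y i) ∈ M := hG0M ⟨i, rfl⟩
    have h2 := hMshort (x i, φ (x i)) (hφ (x i)) (x i, y i) h1
    simp only [dist_self] at h2
    exact dist_le_zero.mp h2
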